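/- arXiv:1403.7806 — 3 statements merged into one kernel-verified Lean document; each statement's English description precedes it below -/
import Mathlib

section
/- For all integers n ≥ 1, the central binomial coefficient satisfies 4^n / sqrt(2 * π * n) ≤ C(2n, n) ≤ 4^n / sqrt(π * n). -/
open Stirling Real Filter Topology Nat

lemma sqrtpi_le_stirlingSeq (n : ℕ) : Real.sqrt Real.pi ≤ stirlingSeq (n + 1) := by
  have ht : Tendsto (stirlingSeq ∘ Nat.succ) atTop (𝓝 (Real.sqrt Real.pi)) :=
    tendsto_stirlingSeq_sqrt_pi.comp (tendsto_add_atTop_nat 1)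
  exact stirlingSeq'_antitone.le_of_tendsto ht n

lemma choose_eq_stirling (n : ℕ) (hn : 1 ≤ n) :
    ((2 * n).choose n : ℝ) =
      4 ^ n / Real.sqrt n * (stirlingSeq (2 * n) / stirlingSeq n ^ 2) := by
  have hn0 : (0 : ℝ) < n := by exact_mod_cast hn
  have h := Nat.choose_mul_factorial_mul_factorial (show n ≤ 2 * n by omega)
  rw [show 2 * n - n = n by omega] at h
  have hfac : ((2 * n).choose n : ℝ) * (n ! : ℝ) * (n ! : ℝ) = ((2 * n)! : ℝ) := by
    exact_mod_cast congrArg (Nat.cast (R := ℝ)) h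
  have hE : (0 : ℝ) < ((n : ℝ) / Real.exp 1) ^ n := by positivity
  have hfn : (0 : ℝ) < (n ! : ℝ) := by exact_mod_cast n.factorial_pos
  have hsq : Real.sqrt (2 * n) ^ 2 = 2 * n := Real.sq_sqrt (by positivity)
  have hsqrt4 : Real.sqrt (2 * (2 * n : ℕ) : ℝ) = 2 * Real.sqrt n := by
    push_cast
    rw [show (2 : ℝ) * (2 * n) = 4 * n by ring, Real.sqrt_mul (by norm_num),
      show Real.sqrt 4 = 2 by rw [show (4:ℝ) = 2^2 by norm_num, Real.sqrt_sq (by norm_num)]]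
  have hpow : ((2 * n : ℕ) / Real.exp 1 : ℝ) ^ (2 * n) = 4 ^ n * (((n : ℝ) / Real.exp 1) ^ n) ^ 2 := by
    push_cast
    rw [mul_div_assoc, mul_pow, ← pow_mul, pow_mul]
    ring
  have hsn : (0 : ℝ) < Real.sqrt n := Real.sqrt_pos.mpr hn0
  unfold stirlingSeq
  rw [hsqrt4, hpow]
  push_cast
  rw [← hfac]
  have hA : (0:ℝ) < Real.sqrt (2 * n) := Real.sqrt_pos.mpr (by positivity)
  field_simp
  ring_nf
  rw [Real.sq_sqrt hn0.le, Real.sq_sqrt (by positivity)]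
  ring

theorem central_binom_robbins (n : ℕ) (hn : 1 ≤ n) :
    (4 : ℝ) ^ n / Real.sqrt (2 * Real.pi * n) ≤ ((2 * n).choose n : ℝ) ∧
    ((2 * n).choose n : ℝ) ≤ (4 : ℝ) ^ n / Real.sqrt (Real.pi * n) := by
  have hn0 : (0 : ℝ) < n := by exact_mod_cast hn
  have hpi : (0 : ℝ) < π := Real.pi_pos
  have hsp : (0 : ℝ) < Real.sqrt π := Real.sqrt_pos.mpr hpi
  have hp1 : Real.sqrt π ≤ stirlingSeq n := by
    have h := sqrtpi_le_stirlingSeq (n - 1)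
    rwa [Nat.sub_add_cancel hn] at h
  have hp2 : Real.sqrt π ≤ stirlingSeq (2 * n) := by
    have h := sqrtpi_le_stirlingSeq (2 * n - 1)
    rwa [Nat.sub_add_cancel (by omega)] at h
  have hs21 : stirlingSeq (2 * n) ≤ stirlingSeq n := by
    have h := stirlingSeq'_antitone (show n - 1 ≤ 2 * n - 1 by omega)
    simpa [Function.comp, Nat.succ_eq_add_one, Nat.sub_add_cancel hn,
      Nat.sub_add_cancel (show 1 ≤ 2 * n by omega)] using h
  have hs1e : stirlingSeq n ≤ Real.exp 1 / Real.sqrt 2 := by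
    have h := stirlingSeq'_antitone (Nat.zero_le (n - 1))
    simpa [Function.comp, Nat.succ_eq_add_one, Nat.sub_add_cancel hn,
      stirlingSeq_one] using h
  have h1 : (0 : ℝ) < stirlingSeq n := lt_of_lt_of_le hsp hp1
  have h2 : (0 : ℝ) < stirlingSeq (2 * n) := lt_of_lt_of_le hsp hp2
  have hsn : (0 : ℝ) < Real.sqrt n := Real.sqrt_pos.mpr hn0
  rw [choose_eq_stirling n hn]
  constructor
  · -- lower bound
    have hkey : stirlingSeq n ^ 2 ≤ Real.sqrt (2 * π) * stirlingSeq (2 * n) := by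
      have he2 : stirlingSeq n ^ 2 ≤ Real.exp 1 ^ 2 / 2 := by
        have h := pow_le_pow_left₀ h1.le hs1e 2
        rwa [div_pow, Real.sq_sqrt (by norm_num : (0:ℝ) ≤ 2)] at h
      have hmid : Real.exp 1 ^ 2 / 2 ≤ Real.sqrt (2 * π) * Real.sqrt π := by
        rw [← Real.sqrt_mul (by positivity)]
        rw [show Real.exp 1 ^ 2 / 2 = Real.sqrt ((Real.exp 1 ^ 2 / 2) ^ 2) by
          rw [Real.sqrt_sq (by positivity)]]
        apply Real.sqrt_le_sqrt
        have hπ : (3.141592 : ℝ) ≤ π := Real.pi_gt_d6.le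
        have he : Real.exp 1 ≤ 2.7182818286 := Real.exp_one_lt_d9.le
        have hep : (0:ℝ) < Real.exp 1 := Real.exp_pos 1
        have hee : Real.exp 1 ^ 2 ≤ 2.7182818286 ^ 2 := by
          nlinarith
        nlinarith [mul_le_mul hee hee (by positivity) (by norm_num),
          mul_le_mul hπ hπ (by norm_num) hpi.le]
      calc stirlingSeq n ^ 2 ≤ Real.exp 1 ^ 2 / 2 := he2
        _ ≤ Real.sqrt (2 * π) * Real.sqrt π := hmid
        _ ≤ Real.sqrt (2 * π) * stirlingSeq (2 * n) := by
            apply mul_le_mul_of_nonneg_left hp2 (Real.sqrt_nonneg _)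
    have hdiv : 1 / Real.sqrt (2 * π) ≤ stirlingSeq (2 * n) / stirlingSeq n ^ 2 := by
      rw [div_le_div_iff₀ (Real.sqrt_pos.mpr (by positivity)) (by positivity)]
      linarith [hkey]
    calc (4 : ℝ) ^ n / Real.sqrt (2 * π * n)
        = 4 ^ n / Real.sqrt n * (1 / Real.sqrt (2 * π)) := by
          rw [Real.sqrt_mul (by positivity)]
          field_simp
      _ ≤ 4 ^ n / Real.sqrt n * (stirlingSeq (2 * n) / stirlingSeq n ^ 2) := by
          apply mul_le_mul_of_nonneg_left hdiv (by positivity)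
  · -- upper bound
    have hdiv : stirlingSeq (2 * n) / stirlingSeq n ^ 2 ≤ 1 / Real.sqrt π := by
      rw [div_le_div_iff₀ (by positivity) hsp]
      nlinarith
    calc 4 ^ n / Real.sqrt n * (stirlingSeq (2 * n) / stirlingSeq n ^ 2)
        ≤ 4 ^ n / Real.sqrt n * (1 / Real.sqrt π) := by
          apply mul_le_mul_of_nonneg_left hdiv (by positivity)
      _ = (4 : ℝ) ^ n / Real.sqrt (π * n) := by
          rw [Real.sqrt_mul hpi.le]
          field_simp
end

section
/- Let n be even, let a be even with 1 ≤ a ≤ n/2, and define p_a = C(n-a, (n-a)/2) * C(a, a/2) / C(n, n/2). Then there exist positive constants c₁, c₂ (independent of n and a) such that c₁/sqrt(a) ≤ p_a ≤ c₂/sqrt(a). -/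
set_option maxHeartbeats 2000000

lemma cb_sq_ub : ∀ k : ℕ, 1 ≤ k →
    Nat.centralBinom k ^ 2 * (2 * k + 1) ≤ 16 ^ k := by
  intro k hk
  induction k with
  | zero => omega
  | succ k ih =>
    rcases Nat.eq_zero_or_pos k with rfl | hk1
    · decide
    · have ih' := ih hk1
      have key : (k + 1) * Nat.centralBinom (k + 1)
          = 2 * (2 * k + 1) * Nat.centralBinom k := Nat.succ_mul_centralBinom_succ k
      set c := Nat.centralBinom k
      set d := Nat.centralBinom (k + 1)
      have key2 : ((k + 1) * d) ^ 2 = (2 * (2 * k + 1) * c) ^ 2 := by rw [key]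
      apply Nat.le_of_mul_le_mul_left _ (show 0 < (k + 1) ^ 2 by positivity)
      calc (k + 1) ^ 2 * (d ^ 2 * (2 * (k + 1) + 1))
          = (2 * (k + 1) + 1) * ((k + 1) * d) ^ 2 := by ring
        _ = (2 * (k + 1) + 1) * (2 * (2 * k + 1) * c) ^ 2 := by rw [key2]
        _ = (4 * (2 * k + 1) * (2 * k + 3)) * (c ^ 2 * (2 * k + 1)) := by ring
        _ ≤ (4 * (2 * k + 1) * (2 * k + 3)) * 16 ^ k := Nat.mul_le_mul_left _ ih'
        _ ≤ (16 * (k + 1) ^ 2) * 16 ^ k := Nat.mul_le_mul_right _ (by nlinarith)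
        _ = (k + 1) ^ 2 * 16 ^ (k + 1) := by ring

lemma cb_sq_lb : ∀ k : ℕ, 1 ≤ k →
    16 ^ k ≤ Nat.centralBinom k ^ 2 * (4 * k) := by
  intro k hk
  induction k with
  | zero => omega
  | succ k ih =>
    rcases Nat.eq_zero_or_pos k with rfl | hk1
    · decide
    · have ih' := ih hk1
      have key : (k + 1) * Nat.centralBinom (k + 1)
          = 2 * (2 * k + 1) * Nat.centralBinom k := Nat.succ_mul_centralBinom_succ k
      set c := Nat.centralBinom k
      set d := Nat.centralBinom (k + 1)
      have key2 : ((k + 1) * d) ^ 2 = (2 * (2 * k + 1) * c) ^ 2 := by rw [key]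
      apply Nat.le_of_mul_le_mul_left _ (show 0 < (k + 1) ^ 2 by positivity)
      calc (k + 1) ^ 2 * 16 ^ (k + 1)
          = (16 * (k + 1) ^ 2) * 16 ^ k := by ring
        _ ≤ (16 * (k + 1) ^ 2) * (c ^ 2 * (4 * k)) := Nat.mul_le_mul_left _ ih'
        _ = (64 * k * (k + 1) ^ 2) * c ^ 2 := by ring
        _ ≤ (16 * (k + 1) * (2 * k + 1) ^ 2) * c ^ 2 :=
            Nat.mul_le_mul_right _ (by nlinarith)
        _ = (4 * (k + 1)) * (2 * (2 * k + 1) * c) ^ 2 := by ring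
        _ = (4 * (k + 1)) * ((k + 1) * d) ^ 2 := by rw [key2]
        _ = (k + 1) ^ 2 * (d ^ 2 * (4 * (k + 1))) := by ring

lemma half_le_of_sq (x : ℝ) (hx : 0 ≤ x) (h : 1/4 ≤ x^2) : 1/2 ≤ x := by nlinarith

lemma le_two_of_sq (x : ℝ) (hx : 0 ≤ x) (h : x^2 ≤ 4) : x ≤ 2 := by nlinarith

theorem pa_theta_inv_sqrt :
    ∃ c₁ c₂ : ℝ, 0 < c₁ ∧ 0 < c₂ ∧
      ∀ n a : ℕ, Even n → Even a → 1 ≤ a → a ≤ n / 2 →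
        c₁ / Real.sqrt a ≤
            ((n - a).choose ((n - a) / 2) : ℝ) * (a.choose (a / 2)) / (n.choose (n / 2)) ∧
        ((n - a).choose ((n - a) / 2) : ℝ) * (a.choose (a / 2)) / (n.choose (n / 2)) ≤
            c₂ / Real.sqrt a := by
  refine ⟨1/2, 2, by norm_num, by norm_num, ?_⟩
  intro n a hn ha ha1 han
  obtain ⟨m, rfl⟩ := hn
  obtain ⟨b, rfl⟩ := ha
  have hb1 : 1 ≤ b := by omega
  have hbm : b + b ≤ m := by omega
  set k := m - b with hkdef
  have hkb : b ≤ k := by omega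
  have hm : m = k + b := by omega
  have hk1 : 1 ≤ k := by omega
  have hna : m + m - (b + b) = k + k := by omega
  have h2 : (m + m) / 2 = m := by omega
  have h3 : (b + b) / 2 = b := by omega
  have h4 : (k + k) / 2 = k := by omega
  rw [hna, h4, h3, h2]
  have e1 : (k + k).choose k = Nat.centralBinom k := by rw [Nat.centralBinom, two_mul]
  have e2 : (b + b).choose b = Nat.centralBinom b := by rw [Nat.centralBinom, two_mul]
  have e3 : (m + m).choose m = Nat.centralBinom m := by rw [Nat.centralBinom, two_mul]
  rw [e1, e2, e3]
  clear_value k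
  clear hkdef han e1 e2 e3 hna h2 h3 h4 ha1 hbm
  have hApos : (0:ℝ) < (Nat.centralBinom k : ℝ) := by exact_mod_cast Nat.centralBinom_pos k
  have hBpos : (0:ℝ) < (Nat.centralBinom b : ℝ) := by exact_mod_cast Nat.centralBinom_pos b
  have hMpos : (0:ℝ) < (Nat.centralBinom m : ℝ) := by exact_mod_cast Nat.centralBinom_pos m
  have hKpos : (1:ℝ) ≤ (k:ℝ) := by exact_mod_cast hk1
  have hBbpos : (1:ℝ) ≤ (b:ℝ) := by exact_mod_cast hb1
  have hBK : (b:ℝ) ≤ (k:ℝ) := by exact_mod_cast hkb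
  have hA1' : (Nat.centralBinom k : ℝ) ^ 2 * (2 * (k:ℝ) + 1) ≤ (16:ℝ) ^ k := by
    exact_mod_cast cb_sq_ub k hk1
  have hA2 : (16:ℝ) ^ k ≤ (Nat.centralBinom k : ℝ) ^ 2 * (4 * (k:ℝ)) := by
    exact_mod_cast cb_sq_lb k hk1
  have hB1' : (Nat.centralBinom b : ℝ) ^ 2 * (2 * (b:ℝ) + 1) ≤ (16:ℝ) ^ b := by
    exact_mod_cast cb_sq_ub b hb1
  have hB2 : (16:ℝ) ^ b ≤ (Nat.centralBinom b : ℝ) ^ 2 * (4 * (b:ℝ)) := by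
    exact_mod_cast cb_sq_lb b hb1
  have hm1 : 1 ≤ m := by omega
  have hmR : (m : ℝ) = (k:ℝ) + (b:ℝ) := by rw [hm]; push_cast; ring
  have hPQ : (16:ℝ) ^ m = (16:ℝ) ^ k * (16:ℝ) ^ b := by rw [hm, pow_add]
  have hM1'' : (Nat.centralBinom m : ℝ) ^ 2 * (2 * (m:ℝ) + 1) ≤ (16:ℝ) ^ m := by
    exact_mod_cast cb_sq_ub m hm1
  have hM2'' : (16:ℝ) ^ m ≤ (Nat.centralBinom m : ℝ) ^ 2 * (4 * (m:ℝ)) := by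
    exact_mod_cast cb_sq_lb m hm1
  rw [hPQ, hmR] at hM1'' hM2''
  have hcast : ((b + b : ℕ) : ℝ) = (b:ℝ) + (b:ℝ) := by push_cast; ring
  rw [hcast]
  set A := (Nat.centralBinom k : ℝ) with hA
  set B := (Nat.centralBinom b : ℝ) with hB
  set M := (Nat.centralBinom m : ℝ) with hM
  set K := (k : ℝ) with hK
  set Bb := (b : ℝ) with hBb
  set P := (16:ℝ) ^ k with hP
  set Q := (16:ℝ) ^ b with hQ
  have hPpos : 0 < P := by rw [hP]; positivity
  have hQpos : 0 < Q := by rw [hQ]; positivity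
  clear_value A B M K Bb P Q
  have hA1 : A ^ 2 * (2 * K) ≤ P := by nlinarith [sq_nonneg A]
  have hB1 : B ^ 2 * (2 * Bb) ≤ Q := by nlinarith [sq_nonneg B]
  have hM1 : M ^ 2 * (2 * (K + Bb)) ≤ P * Q := by nlinarith [sq_nonneg M]
  have hM2 : P * Q ≤ M ^ 2 * (4 * (K + Bb)) := hM2''
  -- key squared bounds
  have h1 : (A ^ 2 * (2 * K)) * (B ^ 2 * (2 * Bb)) ≤ P * Q :=
    mul_le_mul hA1 hB1 (by positivity) (by positivity)
  have hU : A ^ 2 * B ^ 2 * Bb ≤ 2 * M ^ 2 := by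
    have h8 : (0:ℝ) < 4 * K := by linarith
    have hstep : (4 * K) * (A ^ 2 * B ^ 2 * Bb) ≤ (4 * K) * (2 * M ^ 2) := by
      calc (4 * K) * (A ^ 2 * B ^ 2 * Bb) = (A ^ 2 * (2 * K)) * (B ^ 2 * (2 * Bb)) := by ring
        _ ≤ P * Q := h1
        _ ≤ M ^ 2 * (4 * (K + Bb)) := hM2
        _ ≤ M ^ 2 * (4 * (K + K)) := by
            apply mul_le_mul_of_nonneg_left (by linarith) (sq_nonneg M)
        _ = (4 * K) * (2 * M ^ 2) := by ring
    exact le_of_mul_le_mul_left hstep h8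
  have h3' : P * Q ≤ (A ^ 2 * (4 * K)) * (B ^ 2 * (4 * Bb)) :=
    mul_le_mul hA2 hB2 (by positivity) (by positivity)
  have hL : M ^ 2 ≤ 8 * Bb * (A ^ 2 * B ^ 2) := by
    have h8 : (0:ℝ) < 2 * (K + Bb) := by linarith
    have hstep : (2 * (K + Bb)) * (M ^ 2) ≤ (2 * (K + Bb)) * (8 * Bb * (A ^ 2 * B ^ 2)) := by
      calc (2 * (K + Bb)) * (M ^ 2) = M ^ 2 * (2 * (K + Bb)) := by ring
        _ ≤ P * Q := hM1
        _ ≤ (A ^ 2 * (4 * K)) * (B ^ 2 * (4 * Bb)) := h3'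
        _ = (16 * K) * (Bb * (A ^ 2 * B ^ 2)) := by ring
        _ ≤ (16 * (K + Bb)) * (Bb * (A ^ 2 * B ^ 2)) := by
            apply mul_le_mul_of_nonneg_right (by linarith)
            positivity
        _ = (2 * (K + Bb)) * (8 * Bb * (A ^ 2 * B ^ 2)) := by ring
    exact le_of_mul_le_mul_left hstep h8
  -- now the sqrt part
  set t := A * B / M with ht
  have ht0 : 0 ≤ t := by positivity
  have ht2 : t ^ 2 = A ^ 2 * B ^ 2 / M ^ 2 := by rw [ht]; ring
  set s := Real.sqrt (Bb + Bb) with hs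
  have hs0 : 0 < s := Real.sqrt_pos.mpr (by linarith)
  have hs2 : s ^ 2 = Bb + Bb := Real.sq_sqrt (by linarith)
  have hM2sq : (0:ℝ) < M ^ 2 := by positivity
  constructor
  · rw [div_le_iff₀ hs0]
    have ht2lb : 1 / (8 * Bb) ≤ t ^ 2 := by
      rw [ht2, div_le_div_iff₀ (by linarith) hM2sq]
      linarith [hL]
    have hsq : 1 / 4 ≤ (t * s) ^ 2 := by
      have h5 : (1 / (8 * Bb)) * (Bb + Bb) ≤ t ^ 2 * (Bb + Bb) :=
        mul_le_mul_of_nonneg_right ht2lb (by linarith)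
      have h6 : (1 / (8 * Bb)) * (Bb + Bb) = 1 / 4 := by
        field_simp; ring
      rw [mul_pow, hs2]
      linarith [h6 ▸ h5]
    exact half_le_of_sq _ (mul_nonneg ht0 hs0.le) hsq
  · rw [le_div_iff₀ hs0]
    have ht2ub : t ^ 2 ≤ 2 / Bb := by
      rw [ht2, div_le_div_iff₀ hM2sq (by linarith)]
      linarith [hU]
    have hsq : (t * s) ^ 2 ≤ 4 := by
      have h5 : t ^ 2 * (Bb + Bb) ≤ (2 / Bb) * (Bb + Bb) :=
        mul_le_mul_of_nonneg_right ht2ub (by linarith)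
      have h6 : (2 / Bb) * (Bb + Bb) = 4 := by
        field_simp; ring
      rw [mul_pow, hs2]
      linarith [h6 ▸ h5]
    exact le_two_of_sq _ (mul_nonneg ht0 hs0.le) hsq
end

section
/- Let X₁, ..., Xₙ be {0,1}-valued random variables such that for all subsets S ⊆ [n], P(∀ i ∈ S, Xᵢ = 1) ≤ ∏_{i ∈ S} P(Xᵢ = 1), and let X = Σᵢ Xᵢ. Then for all d > 0, P(X ≥ E[X] + d) ≤ exp(-2d²/n). -/
open MeasureTheory

lemma bernoulli_hoeffding (p : ℝ) (hp0 : 0 ≤ p) (hp1 : p ≤ 1) (t : ℝ) (ht : 0 ≤ t) :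
    1 - p + p * Real.exp t ≤ Real.exp (p * t + t ^ 2 / 8) := by
  have hf : ∀ s : ℝ, 0 < 1 - p + p * Real.exp s := by
    intro s
    rcases eq_or_lt_of_le hp0 with h | h
    · nlinarith [Real.exp_pos s]
    · nlinarith [mul_pos h (Real.exp_pos s)]
  set g' : ℝ → ℝ := fun s => p + s / 4 - p * Real.exp s / (1 - p + p * Real.exp s) with hg'def
  set g : ℝ → ℝ := fun s => p * s + s ^ 2 / 8 - Real.log (1 - p + p * Real.exp s) with hgdef
  have hden : ∀ s : ℝ, HasDerivAt (fun s => 1 - p + p * Real.exp s) (p * Real.exp s) s := by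
    intro s
    simpa using ((Real.hasDerivAt_exp s).const_mul p).const_add (1 - p)
  have hg : ∀ s : ℝ, HasDerivAt g (g' s) s := by
    intro s
    have h2 : HasDerivAt (fun s => Real.log (1 - p + p * Real.exp s))
        (p * Real.exp s / (1 - p + p * Real.exp s)) s := (hden s).log (hf s).ne'
    have h3 : HasDerivAt (fun s : ℝ => p * s + s ^ 2 / 8) (p + s / 4) s := by
      have := ((hasDerivAt_id s).const_mul p).add ((hasDerivAt_pow 2 s).div_const 8)
      simpa [mul_comm, Pi.add_def] using this.congr_deriv (by ring)
    simpa [hgdef, hg'def, Pi.sub_def] using h3.sub h2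
  have hg' : ∀ s : ℝ, HasDerivAt g'
      (1 / 4 - (p * Real.exp s * (1 - p + p * Real.exp s) - p * Real.exp s * (p * Real.exp s))
        / (1 - p + p * Real.exp s) ^ 2) s := by
    intro s
    have h4 : HasDerivAt (fun s => p * Real.exp s / (1 - p + p * Real.exp s))
        ((p * Real.exp s * (1 - p + p * Real.exp s) - p * Real.exp s * (p * Real.exp s))
          / (1 - p + p * Real.exp s) ^ 2) s :=
      ((Real.hasDerivAt_exp s).const_mul p).div (hden s) (hf s).ne'
    have h5 : HasDerivAt (fun s : ℝ => p + s / 4) (1 / 4) s := by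
      simpa using ((hasDerivAt_id s).div_const 4).const_add p
    simpa [hg'def, Pi.sub_def] using h5.sub h4
  have hgpp : ∀ s : ℝ, 0 ≤ 1 / 4 -
      (p * Real.exp s * (1 - p + p * Real.exp s) - p * Real.exp s * (p * Real.exp s))
        / (1 - p + p * Real.exp s) ^ 2 := by
    intro s
    have h := hf s
    rw [sub_nonneg, div_le_iff₀ (by positivity)]
    nlinarith [sq_nonneg (p * Real.exp s - (1 - p)), Real.exp_pos s]
  have hg'mono : Monotone g' := by
    apply monotone_of_deriv_nonneg
    · exact fun s => (hg' s).differentiableAt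
    · intro s
      rw [(hg' s).deriv]
      exact hgpp s
  have hg'0 : g' 0 = 0 := by
    simp [hg'def, Real.exp_zero]
  have hg'nonneg : ∀ s ∈ Set.Ici (0:ℝ), 0 ≤ g' s := by
    intro s hs
    rw [← hg'0]
    exact hg'mono hs
  have hgmono : MonotoneOn g (Set.Ici 0) := by
    apply monotoneOn_of_deriv_nonneg (convex_Ici 0)
    · exact fun s _ => (hg s).differentiableAt.continuousAt.continuousWithinAt
    · exact fun s hs => ((hg s).differentiableAt).differentiableWithinAt
    · intro s hs
      rw [(hg s).deriv]
      exact hg'nonneg s (interior_subset hs)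
  have hg0 : g 0 = 0 := by
    simp [hgdef]
  have hgt : 0 ≤ g t := by
    rw [← hg0]
    exact hgmono Set.self_mem_Ici ht ht
  have : Real.log (1 - p + p * Real.exp t) ≤ p * t + t ^ 2 / 8 := by
    simp only [hgdef] at hgt; linarith
  calc 1 - p + p * Real.exp t = Real.exp (Real.log (1 - p + p * Real.exp t)) :=
        (Real.exp_log (hf t)).symm
    _ ≤ _ := Real.exp_le_exp.mpr this

theorem chernoff_negatively_correlated
    {Ω : Type*} [MeasurableSpace Ω] (μ : Measure Ω) [IsProbabilityMeasure μ]
    (n : ℕ) (hn : 1 ≤ n) (X : Fin n → Ω → ℝ)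
    (hmeas : ∀ i, Measurable (X i))
    (hval : ∀ i ω, X i ω = 0 ∨ X i ω = 1)
    (hneg : ∀ S : Finset (Fin n),
      μ {ω | ∀ i ∈ S, X i ω = 1} ≤ ∏ i ∈ S, μ {ω | X i ω = 1}) :
    ∀ d : ℝ, 0 < d →
      μ {ω | (∫ ω', ∑ i, X i ω' ∂μ) + d ≤ ∑ i, X i ω} ≤
        ENNReal.ofReal (Real.exp (-2 * d ^ 2 / n)) := by
  intro d hd
  have hnpos : (0:ℝ) < n := by exact_mod_cast hn
  set B : Finset (Fin n) → Set Ω := fun S => {ω | ∀ i ∈ S, X i ω = 1} with hB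
  have hBmeas : ∀ S, MeasurableSet (B S) := by
    intro S
    have : B S = ⋂ i ∈ S, (X i) ⁻¹' {1} := by
      ext ω; simp [hB, Set.mem_iInter]
    rw [this]
    exact MeasurableSet.biInter S.countable_toSet
      (fun i _ => (hmeas i) (measurableSet_singleton 1))
  set p : Fin n → ℝ := fun i => (μ {ω | X i ω = 1}).toReal with hp
  have hp0 : ∀ i, 0 ≤ p i := fun i => ENNReal.toReal_nonneg
  have hp1 : ∀ i, p i ≤ 1 := by
    intro i
    have := prob_le_one (μ := μ) (s := {ω | X i ω = 1})
    simpa [hp] using ENNReal.toReal_le_toReal (measure_ne_top μ _) (by simp) |>.mpr this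
  -- product is indicator
  have hprod_ind : ∀ (S : Finset (Fin n)) (ω : Ω),
      ∏ i ∈ S, X i ω = (B S).indicator (1 : Ω → ℝ) ω := by
    intro S ω
    by_cases h : ω ∈ B S
    · rw [Set.indicator_of_mem h]
      exact Finset.prod_eq_one (fun i hi => h i hi)
    · rw [Set.indicator_of_notMem h]
      simp only [hB, Set.mem_setOf_eq, not_forall] at h
      obtain ⟨i, hi, hne⟩ := h
      have : X i ω = 0 := (hval i ω).resolve_right hne
      exact Finset.prod_eq_zero hi this
  have hint_prod : ∀ S : Finset (Fin n), Integrable (fun ω => ∏ i ∈ S, X i ω) μ := by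
    intro S
    have : (fun ω => ∏ i ∈ S, X i ω) = (B S).indicator (1 : Ω → ℝ) :=
      funext fun ω => hprod_ind S ω
    rw [this]
    exact (integrable_const (1:ℝ)).indicator (hBmeas S)
  have hintegral_prod : ∀ S : Finset (Fin n),
      ∫ ω, ∏ i ∈ S, X i ω ∂μ = (μ (B S)).toReal := by
    intro S
    simp_rw [hprod_ind]
    rw [integral_indicator_one (hBmeas S)]
    rfl
  -- mean
  have hmean_i : ∀ i, ∫ ω, X i ω ∂μ = p i := by
    intro i
    have := hintegral_prod {i}
    simpa [hB, hp] using this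
  have hint_i : ∀ i, Integrable (X i) μ := by
    intro i
    have := hint_prod {i}
    simpa using this
  have hmean : ∫ ω, ∑ i, X i ω ∂μ = ∑ i, p i := by
    rw [integral_finset_sum _ (fun i _ => hint_i i)]
    exact Finset.sum_congr rfl fun i _ => hmean_i i
  set m : ℝ := ∑ i, p i with hm
  set t : ℝ := 4 * d / n with htdef
  have ht : 0 ≤ t := by positivity
  set c : ℝ := Real.exp t - 1 with hc
  have hc0 : 0 ≤ c := by
    have := Real.one_le_exp ht
    simp [hc]; linarith
  -- pointwise expansion
  have hexp_eq : ∀ ω, Real.exp (t * ∑ i, X i ω)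
      = ∑ S ∈ (Finset.univ : Finset (Fin n)).powerset,
          c ^ S.card * ∏ i ∈ S, X i ω := by
    intro ω
    have h1 : Real.exp (t * ∑ i, X i ω) = ∏ i, (c * X i ω + 1) := by
      rw [Finset.mul_sum, Real.exp_sum]
      refine Finset.prod_congr rfl fun i _ => ?_
      rcases hval i ω with h | h <;> simp [h, hc]
    rw [h1, Finset.prod_add]
    refine Finset.sum_congr rfl fun S _ => ?_
    rw [Finset.prod_const_one, mul_one, Finset.prod_mul_distrib, Finset.prod_const]
  -- integrability of exp(t * sum)
  have hint_exp : Integrable (fun ω => Real.exp (t * ∑ i, X i ω)) μ := by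
    have : (fun ω => Real.exp (t * ∑ i, X i ω))
        = fun ω => ∑ S ∈ (Finset.univ : Finset (Fin n)).powerset,
            c ^ S.card * ∏ i ∈ S, X i ω := funext hexp_eq
    rw [this]
    exact integrable_finset_sum _ fun S _ => (hint_prod S).const_mul _
  -- mgf bound
  have hmgf : ProbabilityTheory.mgf (fun ω => ∑ i, X i ω) μ t
      ≤ Real.exp (t * m + n * t ^ 2 / 8) := by
    unfold ProbabilityTheory.mgf
    calc ∫ ω, Real.exp (t * ∑ i, X i ω) ∂μ
        = ∑ S ∈ (Finset.univ : Finset (Fin n)).powerset,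
            c ^ S.card * (μ (B S)).toReal := by
          simp_rw [hexp_eq]
          rw [integral_finset_sum _ fun S _ => (hint_prod S).const_mul _]
          refine Finset.sum_congr rfl fun S _ => ?_
          rw [integral_const_mul, hintegral_prod]
      _ ≤ ∑ S ∈ (Finset.univ : Finset (Fin n)).powerset,
            c ^ S.card * ∏ i ∈ S, p i := by
          refine Finset.sum_le_sum fun S _ => ?_
          refine mul_le_mul_of_nonneg_left ?_ (pow_nonneg hc0 _)
          have h1 : μ (B S) ≤ ∏ i ∈ S, μ {ω | X i ω = 1} := hneg S
          have h2 : (∏ i ∈ S, μ {ω | X i ω = 1}) ≠ ⊤ :=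
            ENNReal.prod_ne_top fun i _ => measure_ne_top μ _
          calc (μ (B S)).toReal ≤ (∏ i ∈ S, μ {ω | X i ω = 1}).toReal :=
                ENNReal.toReal_le_toReal (measure_ne_top μ _) h2 |>.mpr h1
            _ = ∏ i ∈ S, p i := ENNReal.toReal_prod _ _
      _ = ∏ i, (c * p i + 1) := by
          rw [Finset.prod_add]
          refine Finset.sum_congr rfl fun S _ => ?_
          rw [Finset.prod_const_one, mul_one, Finset.prod_mul_distrib, Finset.prod_const]
      _ ≤ ∏ i, Real.exp (p i * t + t ^ 2 / 8) := by
          refine Finset.prod_le_prod (fun i _ => by positivity) fun i _ => ?_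
          have := bernoulli_hoeffding (p i) (hp0 i) (hp1 i) t ht
          calc c * p i + 1 = 1 - p i + p i * Real.exp t := by rw [hc]; ring
            _ ≤ _ := this
      _ = Real.exp (t * m + n * t ^ 2 / 8) := by
          rw [← Real.exp_sum]
          congr 1
          rw [Finset.sum_add_distrib, Finset.sum_const, ← Finset.sum_mul]
          simp [hm, mul_comm]
          ring
  -- Chernoff
  have hch := ProbabilityTheory.measure_ge_le_exp_mul_mgf (μ := μ)
      (X := fun ω => ∑ i, X i ω) (t := t) (m + d) ht hint_exp
  have hfinal : (μ {ω | m + d ≤ ∑ i, X i ω}).toReal ≤ Real.exp (-2 * d ^ 2 / n) := by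
    refine hch.trans ?_
    calc Real.exp (-t * (m + d)) * ProbabilityTheory.mgf (fun ω => ∑ i, X i ω) μ t
        ≤ Real.exp (-t * (m + d)) * Real.exp (t * m + n * t ^ 2 / 8) :=
          mul_le_mul_of_nonneg_left hmgf (Real.exp_nonneg _)
      _ = Real.exp (-t * (m + d) + (t * m + n * t ^ 2 / 8)) := (Real.exp_add _ _).symm
      _ = Real.exp (-2 * d ^ 2 / n) := by
          congr 1
          rw [htdef]
          field_simp
          ring
  rw [hmean]
  calc μ {ω | m + d ≤ ∑ i, X i ω}
      = ENNReal.ofReal (μ {ω | m + d ≤ ∑ i, X i ω}).toReal :=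
        (ENNReal.ofReal_toReal (measure_ne_top μ _)).symm
    _ ≤ ENNReal.ofReal (Real.exp (-2 * d ^ 2 / n)) := ENNReal.ofReal_le_ofReal hfinal
end
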